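/- Let {f_n} be a lower semi-frame for a separable Hilbert space H with lower bound α, and let {g_n} be a Bessel sequence in H with Bessel bound β. If {f_n + g_n} is complete in H and √α > √β, then {f_n + g_n} is a lower semi-frame for H; in fact (√α − √β)² ‖f‖² ≤ Σ_n |⟨f, f_n + g_n⟩|² for all f ∈ H. -/

import Mathlib

open scoped ENNReal InnerProductSpace

noncomputable section

/-- The square-sum `∑ₙ |⟨x, fₙ⟩|²` of the analysis coefficients of `x`
against the sequence `f`, valued in `ℝ≥0∞`. -/
def analysisSum {H : Type*} [NormedAddCommGroup H] [InnerProductSpace ℂ H]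
    (f : ℕ → H) (x : H) : ℝ≥0∞ :=
  ∑' n, (‖(⟪x, f n⟫_ℂ : ℂ)‖₊ : ℝ≥0∞) ^ 2

/-- `f` is a lower semi-frame for `H`. -/
def IsLowerSemiFrame {H : Type*} [NormedAddCommGroup H] [InnerProductSpace ℂ H]
    (f : ℕ → H) : Prop :=
  ∃ A : ℝ, 0 < A ∧ ∀ x : H, ENNReal.ofReal (A * ‖x‖ ^ 2) ≤ analysisSum f x

lemma analysisSum_eq_tsum_ofReal {H : Type*} [NormedAddCommGroup H] [InnerProductSpace ℂ H]
    (f : ℕ → H) (x : H) :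
    analysisSum f x = ∑' n, ENNReal.ofReal (‖(⟪x, f n⟫_ℂ : ℂ)‖ ^ 2) := by
  unfold analysisSum
  congr 1
  funext n
  rw [ENNReal.ofReal_pow (norm_nonneg _), ofReal_norm, enorm_eq_nnnorm]

lemma summable_of_analysisSum_ne_top {H : Type*} [NormedAddCommGroup H]
    [InnerProductSpace ℂ H] (f : ℕ → H) (x : H) (h : analysisSum f x ≠ ⊤) :
    Summable fun n => ‖(⟪x, f n⟫_ℂ : ℂ)‖ ^ 2 := by
  have h2 : analysisSum f x = ∑' n, ((‖(⟪x, f n⟫_ℂ : ℂ)‖₊ ^ 2 : NNReal) : ℝ≥0∞) := by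
    unfold analysisSum; simp [ENNReal.coe_pow]
  rw [h2] at h
  have := ENNReal.tsum_coe_ne_top_iff_summable.mp h
  have := NNReal.summable_coe.mpr this
  simpa using this

lemma analysisSum_eq_ofReal_tsum {H : Type*} [NormedAddCommGroup H]
    [InnerProductSpace ℂ H] (f : ℕ → H) (x : H)
    (h : Summable fun n => ‖(⟪x, f n⟫_ℂ : ℂ)‖ ^ 2) :
    analysisSum f x = ENNReal.ofReal (∑' n, ‖(⟪x, f n⟫_ℂ : ℂ)‖ ^ 2) := by
  rw [analysisSum_eq_tsum_ofReal,
    ENNReal.ofReal_tsum_of_nonneg (fun n => by positivity) h]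

/-- If `{fₙ}` is a lower semi-frame for `H` with bound `α`, `{gₙ}` is a
Bessel sequence with bound `β`, `{fₙ + gₙ}` is complete in `H` and `√α > √β`, then
`(√α − √β)² ‖x‖² ≤ ∑ₙ |⟨x, fₙ + gₙ⟩|²` for all `x`, so `{fₙ + gₙ}` is a lower
semi-frame for `H`. -/
theorem lowerSemiFrame_add_bessel
    {H : Type*} [NormedAddCommGroup H] [InnerProductSpace ℂ H] [CompleteSpace H]
    [TopologicalSpace.SeparableSpace H]
    (f g : ℕ → H) (α β : ℝ) (hα : 0 < α) (hβ : 0 < β)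
    (hlsf : ∀ x : H, ENNReal.ofReal (α * ‖x‖ ^ 2) ≤ analysisSum f x)
    (hbes : ∀ x : H, analysisSum g x ≤ ENNReal.ofReal (β * ‖x‖ ^ 2))
    (hcomp : Dense (Submodule.span ℂ (Set.range fun n => f n + g n) : Set H))
    (hab : Real.sqrt β < Real.sqrt α) :
    (∀ x : H, ENNReal.ofReal ((Real.sqrt α - Real.sqrt β) ^ 2 * ‖x‖ ^ 2) ≤
        analysisSum (fun n => f n + g n) x) ∧
      IsLowerSemiFrame (fun n => f n + g n) := by
  have key : ∀ x : H, ENNReal.ofReal ((Real.sqrt α - Real.sqrt β) ^ 2 * ‖x‖ ^ 2) ≤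
      analysisSum (fun n => f n + g n) x := by
    intro x
    by_cases hT : analysisSum (fun n => f n + g n) x = ⊤
    · rw [hT]; exact le_top
    -- real-valued norms
    set a : ℕ → ℝ := fun n => ‖(⟪x, f n + g n⟫_ℂ : ℂ)‖ with ha
    set b : ℕ → ℝ := fun n => ‖(⟪x, f n⟫_ℂ : ℂ)‖ with hb
    set c : ℕ → ℝ := fun n => ‖(⟪x, g n⟫_ℂ : ℂ)‖ with hc
    have hA : Summable fun n => a n ^ 2 := summable_of_analysisSum_ne_top _ x hT
    have hCne : analysisSum g x ≠ ⊤ :=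
      ne_top_of_le_ne_top ENNReal.ofReal_ne_top (hbes x)
    have hC : Summable fun n => c n ^ 2 := summable_of_analysisSum_ne_top _ x hCne
    -- pointwise triangle inequality : b n ≤ a n + c n
    have hbac : ∀ n, b n ≤ a n + c n := by
      intro n
      have : (⟪x, f n⟫_ℂ : ℂ) = ⟪x, f n + g n⟫_ℂ - ⟪x, g n⟫_ℂ := by
        rw [← inner_sub_right]
        congr 1
        abel
      show ‖(⟪x, f n⟫_ℂ : ℂ)‖ ≤ ‖(⟪x, f n + g n⟫_ℂ : ℂ)‖ + ‖(⟪x, g n⟫_ℂ : ℂ)‖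
      rw [this]
      exact norm_sub_le _ _
    -- Minkowski
    have hmink := Real.Lp_add_le_tsum_of_nonneg (f := a) (g := c)
      (one_le_two : (1:ℝ) ≤ 2) (fun n => norm_nonneg _)
      (fun n => norm_nonneg _)
      (by simpa [Real.rpow_two] using hA) (by simpa [Real.rpow_two] using hC)
    have hACsum : Summable fun n => (a n + c n) ^ 2 := by
      have := hmink.1
      simpa [Real.rpow_two] using this
    have hB : Summable fun n => b n ^ 2 := by
      apply Summable.of_nonneg_of_le (fun n => by positivity) (fun n => ?_) hACsum
      exact pow_le_pow_left₀ (norm_nonneg _) (hbac n) 2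
    have hBle : ∑' n, b n ^ 2 ≤ ∑' n, (a n + c n) ^ 2 := by
      apply Summable.tsum_le_tsum (fun n => pow_le_pow_left₀ (norm_nonneg _) (hbac n) 2) hB hACsum
    have hmink2 : (∑' n, (a n + c n) ^ 2) ^ ((1:ℝ)/2) ≤
        (∑' n, a n ^ 2) ^ ((1:ℝ)/2) + (∑' n, c n ^ 2) ^ ((1:ℝ)/2) := by
      have := hmink.2
      simpa [Real.rpow_two] using this
    -- translate to sqrt
    have hsq : ∀ y : ℝ, y ^ ((1:ℝ)/2) = Real.sqrt y := fun y =>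
      (Real.sqrt_eq_rpow y).symm
    rw [hsq, hsq, hsq] at hmink2
    -- lower bound on ∑ b²
    have hαb : α * ‖x‖ ^ 2 ≤ ∑' n, b n ^ 2 := by
      have := hlsf x
      rw [analysisSum_eq_ofReal_tsum f x hB] at this
      exact (ENNReal.ofReal_le_ofReal_iff (tsum_nonneg fun n => sq_nonneg _)).mp this
    -- upper bound on ∑ c²
    have hβc : ∑' n, c n ^ 2 ≤ β * ‖x‖ ^ 2 := by
      have := hbes x
      rw [analysisSum_eq_ofReal_tsum g x hC] at this
      exact (ENNReal.ofReal_le_ofReal_iff (by positivity)).mp this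
    -- chain of sqrt inequalities
    have hAnn : 0 ≤ ∑' n, a n ^ 2 := tsum_nonneg fun n => by positivity
    have h1 : Real.sqrt α * ‖x‖ ≤ Real.sqrt (∑' n, b n ^ 2) := by
      have : Real.sqrt (α * ‖x‖ ^ 2) ≤ Real.sqrt (∑' n, b n ^ 2) :=
        Real.sqrt_le_sqrt hαb
      rwa [Real.sqrt_mul hα.le, Real.sqrt_sq (norm_nonneg x)] at this
    have h2 : Real.sqrt (∑' n, b n ^ 2) ≤ Real.sqrt (∑' n, (a n + c n) ^ 2) :=
      Real.sqrt_le_sqrt hBle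
    have h3 : Real.sqrt (∑' n, c n ^ 2) ≤ Real.sqrt β * ‖x‖ := by
      have : Real.sqrt (∑' n, c n ^ 2) ≤ Real.sqrt (β * ‖x‖ ^ 2) :=
        Real.sqrt_le_sqrt hβc
      rwa [Real.sqrt_mul hβ.le, Real.sqrt_sq (norm_nonneg x)] at this
    have hfinal : (Real.sqrt α - Real.sqrt β) * ‖x‖ ≤ Real.sqrt (∑' n, a n ^ 2) := by
      have := (h1.trans h2).trans hmink2
      nlinarith [h3]
    -- square it
    have hsqle : (Real.sqrt α - Real.sqrt β) ^ 2 * ‖x‖ ^ 2 ≤ ∑' n, a n ^ 2 := by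
      have hd : 0 ≤ Real.sqrt α - Real.sqrt β := sub_nonneg.mpr hab.le
      have h4 : ((Real.sqrt α - Real.sqrt β) * ‖x‖) ^ 2 ≤
          Real.sqrt (∑' n, a n ^ 2) ^ 2 :=
        pow_le_pow_left₀ (by positivity) hfinal 2
      rw [Real.sq_sqrt hAnn] at h4
      calc (Real.sqrt α - Real.sqrt β) ^ 2 * ‖x‖ ^ 2
          = ((Real.sqrt α - Real.sqrt β) * ‖x‖) ^ 2 := by ring
        _ ≤ ∑' n, a n ^ 2 := h4
    rw [analysisSum_eq_ofReal_tsum _ x hA]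
    exact ENNReal.ofReal_le_ofReal hsqle
  refine ⟨key, (Real.sqrt α - Real.sqrt β) ^ 2, ?_, key⟩
  exact pow_pos (sub_pos.mpr hab) 2
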